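/- Let M > 0 be real, ω a positive integer, r > 0 real, φ real with 0 < φ < π/2, and θ real with πω/2 < θ < πω. Then the contour-rotation identity holds: ∫_0^∞ e^{-t} t^{M-1} / (1 + (t/r)^{1/ω} e^{-iθ/ω}) dt = (e^{iMφ}/(cos φ)^M) · ∫_0^∞ e^{-u e^{iφ}/cos φ} u^{M-1} / (1 + (u/(r cos φ))^{1/ω} e^{i(φ-θ)/ω}) du, both integrals being absolutely convergent. -/

import Mathlib

open MeasureTheory Real Complex Set Metric Filter

namespace HypContour

/-- The complex absolute value, as an absolute value (replacing the removed `Complex.abs`). -/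
noncomputable def Complex.abs : AbsoluteValue ℂ ℝ where
  toFun := fun z => ‖z‖
  map_mul' := norm_mul
  nonneg' := norm_nonneg
  eq_zero' _ := norm_eq_zero
  add_le' := norm_add_le

lemma Complex.norm_eq_abs (z : ℂ) : ‖z‖ = Complex.abs z := rfl

lemma Complex.abs_apply (z : ℂ) : Complex.abs z = Real.sqrt (Complex.normSq z) :=
  Complex.norm_def z

lemma Complex.abs_ofReal (x : ℝ) : Complex.abs (x : ℂ) = |x| := by
  show ‖(x : ℂ)‖ = |x|
  simp

lemma Complex.abs_exp (z : ℂ) : Complex.abs (Complex.exp z) = Real.exp z.re :=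
  _root_.Complex.norm_exp z

lemma Complex.re_le_abs (z : ℂ) : z.re ≤ Complex.abs z := _root_.Complex.re_le_norm z

lemma Complex.abs_cpow_of_ne_zero {z : ℂ} (hz : z ≠ 0) (w : ℂ) :
    Complex.abs (z ^ w) = Complex.abs z ^ w.re / Real.exp (Complex.arg z * w.im) :=
  _root_.Complex.norm_cpow_of_ne_zero hz w

lemma sin_le_abs_one_add (ρ α : ℝ) :
    |Real.sin α| ≤ Complex.abs (1 + (ρ : ℂ) * Complex.exp ((α : ℝ) * Complex.I)) := by
  have h : (1 + (ρ : ℂ) * Complex.exp ((α : ℝ) * Complex.I))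
      = Complex.mk (1 + ρ * Real.cos α) (ρ * Real.sin α) := by
    rw [Complex.exp_mul_I, Complex.mk_eq_add_mul_I]
    push_cast
    ring
  rw [h, Complex.abs_apply, Complex.normSq_mk, ← Real.sqrt_sq_eq_abs]
  apply Real.sqrt_le_sqrt
  nlinarith [Real.sin_sq_add_cos_sq α, sq_nonneg (ρ + Real.cos α)]

lemma cpow_real_eq (x : ℂ) (hx : x ≠ 0) (c : ℝ) :
    x ^ (c : ℂ) = ((Complex.abs x ^ c : ℝ) : ℂ) *
      Complex.exp (((c * Complex.arg x : ℝ) : ℂ) * Complex.I) := by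
  rw [Complex.cpow_def_of_ne_zero hx, Complex.log, Real.rpow_def_of_pos (Complex.abs.pos hx),
    Complex.ofReal_exp, ← Complex.exp_add]
  congr 1
  push_cast
  rw [← Complex.norm_eq_abs]
  ring

/-- The denominator. -/
noncomputable def Df (r θ : ℝ) (ω : ℕ) (s : ℂ) (u : ℝ) : ℂ :=
  1 + (((u / r) ^ (1 / (ω : ℝ)) : ℝ) : ℂ) * s ^ ((1 / (ω : ℝ) : ℝ) : ℂ) *
    Complex.exp (-(θ / (ω : ℝ)) * Complex.I)

/-- The integrand, as a function of the complex parameter `s`. -/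
noncomputable def Gf (M r θ : ℝ) (ω : ℕ) (s : ℂ) (u : ℝ) : ℂ :=
  Complex.exp (-u * s) * ((u ^ (M - 1) : ℝ) : ℂ) / Df r θ ω s u

lemma Df_eq (r θ : ℝ) (ω : ℕ) {s : ℂ} (hs : s ≠ 0) (u : ℝ) :
    Df r θ ω s u = 1 + (((u / r) ^ (1 / (ω : ℝ)) * Complex.abs s ^ (1 / (ω : ℝ)) : ℝ) : ℂ) *
      Complex.exp ((((s.arg - θ) / (ω : ℝ)) : ℝ) * Complex.I) := by
  have h : Complex.exp ((((1 / (ω : ℝ)) * s.arg : ℝ) : ℂ) * Complex.I) *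
      Complex.exp (-(θ / (ω : ℝ)) * Complex.I)
      = Complex.exp ((((s.arg - θ) / (ω : ℝ)) : ℝ) * Complex.I) := by
    rw [← Complex.exp_add]; congr 1; push_cast; ring
  rw [Df, cpow_real_eq s hs]
  linear_combination ((((u / r) ^ (1 / (ω : ℝ)) : ℝ) : ℂ) *
      ((Complex.abs s ^ (1 / (ω : ℝ)) : ℝ) : ℂ)) * h +
    Complex.exp ((((s.arg - θ) / (ω : ℝ)) : ℝ) * Complex.I) *
      (Complex.ofReal_mul ((u / r) ^ (1 / (ω : ℝ))) (Complex.abs s ^ (1 / (ω : ℝ)))).symm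

lemma sin_le_abs_Df (r θ : ℝ) (ω : ℕ) {s : ℂ} (hs : s ≠ 0) (u : ℝ) :
    Real.sin ((θ - s.arg) / (ω : ℝ)) ≤ Complex.abs (Df r θ ω s u) := by
  rw [Df_eq r θ ω hs u]
  refine le_trans ?_ (sin_le_abs_one_add _ ((s.arg - θ) / (ω : ℝ)))
  have : Real.sin ((θ - s.arg) / (ω : ℝ)) = -Real.sin ((s.arg - θ) / (ω : ℝ)) := by
    rw [← Real.sin_neg]; ring_nf
  rw [this]
  exact neg_le_abs _


/-- The open convex cone on which everything is analytic. -/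
def Udom (ψ : ℝ) : Set ℂ := {s : ℂ | 0 < s.re ∧ Real.tan (-ψ) * s.re < s.im}

lemma Udom_open (ψ : ℝ) : IsOpen (Udom ψ) := by
  have h1 : IsOpen {s : ℂ | 0 < s.re} := isOpen_lt continuous_const Complex.continuous_re
  have h2 : IsOpen {s : ℂ | Real.tan (-ψ) * s.re < s.im} :=
    isOpen_lt (continuous_const.mul Complex.continuous_re) Complex.continuous_im
  exact h1.inter h2

lemma Udom_convex (ψ : ℝ) : Convex ℝ (Udom ψ) := by
  have h1 : Convex ℝ {s : ℂ | 0 < s.re} := convex_halfSpace_re_gt 0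
  have h2 : Convex ℝ {s : ℂ | Real.tan (-ψ) * s.re < s.im} := by
    have : {s : ℂ | Real.tan (-ψ) * s.re < s.im}
        = {s : ℂ | (Real.tan (-ψ) • Complex.reLm - Complex.imLm) s < 0} := by
      ext s
      simp only [Set.mem_setOf_eq, LinearMap.sub_apply, LinearMap.smul_apply,
        Complex.reLm_coe, Complex.imLm_coe, smul_eq_mul]
      constructor <;> intro h <;> linarith
    rw [this]
    exact (convex_Iio (0:ℝ)).linear_preimage _
  exact h1.inter h2

lemma Udom_ne_zero {ψ : ℝ} {s : ℂ} (hs : s ∈ Udom ψ) : s ≠ 0 := by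
  intro h
  rw [h] at hs
  simpa using hs.1

lemma Udom_slit {ψ : ℝ} {s : ℂ} (hs : s ∈ Udom ψ) : s ∈ Complex.slitPlane :=
  Or.inl hs.1

lemma Udom_arg_lt {ψ : ℝ} {s : ℂ} (hs : s ∈ Udom ψ) : s.arg < π / 2 := by
  have := Complex.abs_arg_lt_pi_div_two_iff.mpr (Or.inl hs.1)
  exact lt_of_abs_lt this

lemma Udom_arg_gt {ψ : ℝ} (hψ₁ : 0 < ψ) (hψ₂ : ψ < π / 2) {s : ℂ} (hs : s ∈ Udom ψ) :
    -ψ < s.arg := by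
  by_contra hc
  push_neg at hc
  have harg : |s.arg| < π / 2 := Complex.abs_arg_lt_pi_div_two_iff.mpr (Or.inl hs.1)
  rw [abs_lt] at harg
  have hmono : Real.tan s.arg ≤ Real.tan (-ψ) :=
    Real.strictMonoOn_tan.monotoneOn ⟨harg.1, harg.2⟩
      ⟨by linarith, by linarith [Real.pi_pos]⟩ hc
  rw [Complex.tan_arg, div_le_iff₀ hs.1] at hmono
  linarith [hs.2]


lemma gammaInt {a b : ℝ} (ha : -1 < a) (hb : 0 < b) :
    IntegrableOn (fun u : ℝ => u ^ a * Real.exp (-b * u)) (Set.Ioi 0) := by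
  have h := integrableOn_rpow_mul_exp_neg_mul_rpow (p := 1) ha zero_lt_one hb
  refine h.congr_fun (fun x hx => ?_) measurableSet_Ioi
  dsimp only
  rw [Real.rpow_one]

section Main

variable {M r θ : ℝ} {ω : ℕ}

lemma psi_pos (hθ₂ : θ < π * ω) : 0 < min (π * ω - θ) (π / 4) :=
  lt_min (by linarith) (by positivity)

lemma psi_lt (hθ₂ : θ < π * ω) : min (π * ω - θ) (π / 4) < π / 2 :=
  lt_of_le_of_lt (min_le_right _ _) (by linarith [Real.pi_pos])

lemma theta_gt (hω : 0 < ω) (hθ₁ : π * ω / 2 < θ) : π / 2 < θ := by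
  have h1 : (1 : ℝ) ≤ ω := by exact_mod_cast hω
  nlinarith [Real.pi_pos]

lemma sin_pos_on (hω : 0 < ω) (hθ₁ : π * ω / 2 < θ) (hθ₂ : θ < π * ω) {s : ℂ}
    (hs : s ∈ Udom (min (π * ω - θ) (π / 4))) :
    0 < Real.sin ((θ - s.arg) / (ω : ℝ)) := by
  have hω' : (0 : ℝ) < ω := by exact_mod_cast hω
  have h1 := Udom_arg_lt hs
  have h2 := Udom_arg_gt (psi_pos hθ₂) (psi_lt hθ₂) hs
  have h3 : min (π * ω - θ) (π / 4) ≤ π * ω - θ := min_le_left _ _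
  apply Real.sin_pos_of_pos_of_lt_pi
  · apply div_pos _ hω'
    have := theta_gt hω hθ₁
    linarith
  · rw [div_lt_iff₀ hω']
    linarith

lemma Gf_continuousOn (hr : 0 < r) {s : ℂ} (hω : 0 < ω) (hθ₁ : π * ω / 2 < θ)
    (hθ₂ : θ < π * ω) (hs : s ∈ Udom (min (π * ω - θ) (π / 4))) :
    ContinuousOn (fun u : ℝ => Gf M r θ ω s u) (Set.Ioi 0) := by
  have hnum : ContinuousOn
      (fun u : ℝ => Complex.exp (-u * s) * ((u ^ (M - 1) : ℝ) : ℂ)) (Set.Ioi 0) := by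
    apply ContinuousOn.mul
    · exact (Complex.continuous_exp.comp
        ((Complex.continuous_ofReal.neg).mul continuous_const)).continuousOn
    · exact Complex.continuous_ofReal.comp_continuousOn
        (fun u hu => (Real.continuousAt_rpow_const u (M - 1)
          (Or.inl (ne_of_gt hu))).continuousWithinAt)
  have hden : ContinuousOn (fun u : ℝ => Df r θ ω s u) (Set.Ioi 0) := by
    unfold Df
    apply continuousOn_const.add
    apply ContinuousOn.mul _ continuousOn_const
    apply ContinuousOn.mul _ continuousOn_const
    apply Complex.continuous_ofReal.comp_continuousOn
    intro u hu
    have hu' : (0:ℝ) < u := hu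
    have : u / r ≠ 0 := by positivity
    exact ((continuousAt_id.div_const r).rpow_const (Or.inl this)).continuousWithinAt
  have hne : ∀ u ∈ Set.Ioi (0:ℝ), Df r θ ω s u ≠ 0 := by
    intro u _
    have h1 := sin_le_abs_Df r θ ω (Udom_ne_zero hs) u
    have h2 := sin_pos_on hω hθ₁ hθ₂ hs
    intro h0
    rw [h0] at h1
    simp at h1
    linarith
  exact hnum.div hden hne

lemma norm_Gf_num {s : ℂ} {u : ℝ} (hu : 0 < u) :
    Complex.abs (Complex.exp (-u * s) * ((u ^ (M - 1) : ℝ) : ℂ))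
      = Real.exp (-(s.re) * u) * u ^ (M - 1) := by
  rw [map_mul, Complex.abs_exp, Complex.abs_ofReal,
    _root_.abs_of_nonneg (Real.rpow_nonneg hu.le _)]
  congr 2
  simp [Complex.mul_re]
  ring

lemma Gf_integrableOn (hM : 0 < M) (hr : 0 < r) (hω : 0 < ω) (hθ₁ : π * ω / 2 < θ)
    (hθ₂ : θ < π * ω) {s : ℂ} (hs : s ∈ Udom (min (π * ω - θ) (π / 4))) :
    IntegrableOn (fun u : ℝ => Gf M r θ ω s u) (Set.Ioi 0) := by
  have hc := sin_pos_on hω hθ₁ hθ₂ hs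
  set c := Real.sin ((θ - s.arg) / (ω : ℝ)) with hcdef
  have hint : IntegrableOn (fun u : ℝ => c⁻¹ * (u ^ (M - 1) * Real.exp (-(s.re) * u)))
      (Set.Ioi 0) := (gammaInt (by linarith) hs.1).const_mul _
  apply Integrable.mono' hint
  · exact (Gf_continuousOn hr hω hθ₁ hθ₂ hs).aestronglyMeasurable measurableSet_Ioi
  · rw [ae_restrict_iff' measurableSet_Ioi]
    filter_upwards with u hu
    have hu' : (0:ℝ) < u := hu
    have hd := sin_le_abs_Df r θ ω (Udom_ne_zero hs) u
    rw [Gf]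
    rw [Complex.norm_eq_abs, map_div₀, norm_Gf_num hu']
    rw [div_eq_mul_inv, mul_comm (c⁻¹)]
    have h1 : (Complex.abs (Df r θ ω s u))⁻¹ ≤ c⁻¹ := inv_anti₀ hc hd
    have h2 : (0:ℝ) ≤ Real.exp (-(s.re) * u) * u ^ (M - 1) := by positivity
    calc Real.exp (-(s.re) * u) * u ^ (M - 1) * (Complex.abs (Df r θ ω s u))⁻¹
        ≤ Real.exp (-(s.re) * u) * u ^ (M - 1) * c⁻¹ :=
          mul_le_mul_of_nonneg_left h1 h2
        _ = u ^ (M - 1) * Real.exp (-(s.re) * u) * c⁻¹ := by ring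


lemma abs_cpow_real' {z : ℂ} (hz : z ≠ 0) (c : ℝ) :
    Complex.abs (z ^ (c : ℂ)) = Complex.abs z ^ c := by
  rw [Complex.abs_cpow_of_ne_zero hz]
  simp

lemma Df_ne_zero (hω : 0 < ω) (hθ₁ : π * ω / 2 < θ) (hθ₂ : θ < π * ω) {s : ℂ}
    (hs : s ∈ Udom (min (π * ω - θ) (π / 4))) (u : ℝ) : Df r θ ω s u ≠ 0 := by
  have h1 := sin_le_abs_Df r θ ω (Udom_ne_zero hs) u
  have h2 := sin_pos_on hω hθ₁ hθ₂ hs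
  intro h0
  rw [h0] at h1
  simp at h1
  linarith

/-- Derivative in `s` of the integrand. -/
noncomputable def Gf' (M r θ : ℝ) (ω : ℕ) (s : ℂ) (u : ℝ) : ℂ :=
  (Complex.exp (-u * s) * ((u ^ (M - 1) : ℝ) : ℂ)) *
    ((-u) * Df r θ ω s u - (((u / r) ^ (1 / (ω : ℝ)) : ℝ) : ℂ) *
      (((1 / (ω : ℝ) : ℝ) : ℂ) * s ^ (((1 / (ω : ℝ) : ℝ) : ℂ) - 1)) *
      Complex.exp (-(θ / (ω : ℝ)) * Complex.I)) / (Df r θ ω s u) ^ 2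

lemma hasDerivAt_Gf {s : ℂ} (hslit : s ∈ Complex.slitPlane)
    (u : ℝ) (hD : Df r θ ω s u ≠ 0) :
    HasDerivAt (fun z => Gf M r θ ω z u) (Gf' M r θ ω s u) s := by
  have hnum : HasDerivAt (fun z : ℂ => Complex.exp (-u * z) * ((u ^ (M - 1) : ℝ) : ℂ))
      ((-u) * Complex.exp (-u * s) * ((u ^ (M - 1) : ℝ) : ℂ)) s := by
    have h1 : HasDerivAt (fun z : ℂ => -(u : ℂ) * z) (-(u : ℂ)) s := by
      simpa using (hasDerivAt_id s).const_mul (-(u : ℂ))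
    have h2 := (h1.cexp).mul_const ((u ^ (M - 1) : ℝ) : ℂ)
    exact h2.congr_deriv (by ring)
  have hcpow : HasDerivAt (fun z : ℂ => z ^ (((1 / (ω : ℝ) : ℝ)) : ℂ))
      ((((1 / (ω : ℝ) : ℝ)) : ℂ) * s ^ ((((1 / (ω : ℝ) : ℝ)) : ℂ) - 1)) s :=
    (Complex.hasStrictDerivAt_cpow_const hslit).hasDerivAt
  have hden : HasDerivAt (fun z => Df r θ ω z u)
      ((((u / r) ^ (1 / (ω : ℝ)) : ℝ) : ℂ) *
        ((((1 / (ω : ℝ) : ℝ)) : ℂ) * s ^ ((((1 / (ω : ℝ) : ℝ)) : ℂ) - 1)) *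
        Complex.exp (-(θ / (ω : ℝ)) * Complex.I)) s := by
    have h3 := ((hcpow.const_mul ((((u / r) ^ (1 / (ω : ℝ)) : ℝ)) : ℂ)).mul_const
      (Complex.exp (-(θ / (ω : ℝ)) * Complex.I))).const_add 1
    exact h3
  have h4 := hnum.div hden hD
  exact h4.congr_deriv (by rw [Gf']; ring)

lemma Gf'_continuousOn (hM : 0 < M) (hr : 0 < r) (hω : 0 < ω) (hθ₁ : π * ω / 2 < θ)
    (hθ₂ : θ < π * ω) {s : ℂ} (hs : s ∈ Udom (min (π * ω - θ) (π / 4))) :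
    ContinuousOn (fun u : ℝ => Gf' M r θ ω s u) (Set.Ioi 0) := by
  have hk : ContinuousOn (fun u : ℝ => (((u / r) ^ (1 / (ω : ℝ)) : ℝ) : ℂ)) (Set.Ioi 0) := by
    apply Complex.continuous_ofReal.comp_continuousOn
    intro u hu
    have hu' : (0 : ℝ) < u := hu
    have : u / r ≠ 0 := by positivity
    exact ((continuousAt_id.div_const r).rpow_const (Or.inl this)).continuousWithinAt
  have hDf : ContinuousOn (fun u : ℝ => Df r θ ω s u) (Set.Ioi 0) := by
    unfold Df
    exact continuousOn_const.add ((hk.mul continuousOn_const).mul continuousOn_const)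
  have hnum : ContinuousOn
      (fun u : ℝ => Complex.exp (-u * s) * ((u ^ (M - 1) : ℝ) : ℂ)) (Set.Ioi 0) := by
    apply ContinuousOn.mul
    · exact (Complex.continuous_exp.comp
        ((Complex.continuous_ofReal.neg).mul continuous_const)).continuousOn
    · exact Complex.continuous_ofReal.comp_continuousOn
        (fun u hu => (Real.continuousAt_rpow_const u (M - 1)
          (Or.inl (ne_of_gt hu))).continuousWithinAt)
  unfold Gf'
  apply ContinuousOn.div
  · apply hnum.mul
    apply ContinuousOn.sub
    · exact (Complex.continuous_ofReal.neg.continuousOn).mul hDf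
    · exact (hk.mul continuousOn_const).mul continuousOn_const
  · exact hDf.pow 2
  · intro u hu
    exact pow_ne_zero 2 (Df_ne_zero hω hθ₁ hθ₂ hs u)


lemma F_differentiableOn (hM : 0 < M) (hr : 0 < r) (hω : 0 < ω) (hθ₁ : π * ω / 2 < θ)
    (hθ₂ : θ < π * ω) :
    DifferentiableOn ℂ (fun s => ∫ u in Set.Ioi (0:ℝ), Gf M r θ ω s u)
      (Udom (min (π * ω - θ) (π / 4))) := by
  intro s₀ hs₀
  have hω' : (0 : ℝ) < ω := by exact_mod_cast hω
  have hslit₀ : s₀ ∈ Complex.slitPlane := Udom_slit hs₀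
  have hc₀ : 0 < Real.sin ((θ - s₀.arg) / (ω : ℝ)) := sin_pos_on hω hθ₁ hθ₂ hs₀
  set cb : ℝ := Real.sin ((θ - s₀.arg) / (ω : ℝ)) / 2 with hcb_def
  have hcb : 0 < cb := by positivity
  set δ : ℝ := s₀.re / 2 with hδ_def
  have hδ : 0 < δ := by have := hs₀.1; positivity
  have hcont : ContinuousAt (fun s : ℂ => Real.sin ((θ - s.arg) / (ω : ℝ))) s₀ :=
    Real.continuous_sin.continuousAt.comp
      ((continuousAt_const.sub (Complex.continuousAt_arg hslit₀)).div_const _)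
  have h1 : ∀ᶠ s in nhds s₀, cb < Real.sin ((θ - s.arg) / (ω : ℝ)) :=
    hcont.eventually (lt_mem_nhds (by linarith))
  have h2 : ∀ᶠ s in nhds s₀, δ < s.re :=
    Complex.continuous_re.continuousAt.eventually (lt_mem_nhds (by have := hs₀.1; linarith))
  have h3 : ∀ᶠ s in nhds s₀, s ∈ Udom (min (π * ω - θ) (π / 4)) :=
    Filter.eventually_of_mem ((Udom_open _).mem_nhds hs₀) (fun _ h => h)
  obtain ⟨ε, hε, hball⟩ := Metric.eventually_nhds_iff_ball.mp ((h1.and h2).and h3)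
  set R : ℝ := Complex.abs s₀ + ε with hR_def
  have hR : 0 < R := add_pos_of_nonneg_of_pos (Complex.abs.nonneg _) hε
  set B : ℝ := δ ^ (1 / (ω : ℝ) - 1) with hB_def
  have hB : 0 < B := Real.rpow_pos_of_pos hδ _
  set r₀ : ℝ := (r ^ (1 / (ω : ℝ)))⁻¹ with hr₀_def
  have hr₀ : 0 < r₀ := by
    rw [hr₀_def]
    exact inv_pos.mpr (Real.rpow_pos_of_pos hr _)
  set bnd : ℝ → ℝ := fun u =>
    (cb ^ 2)⁻¹ * (u ^ M * Real.exp (-δ * u))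
      + (cb ^ 2)⁻¹ * (r₀ * R ^ (1 / (ω : ℝ))) * (u ^ (M + 1 / (ω : ℝ)) * Real.exp (-δ * u))
      + (cb ^ 2)⁻¹ * (r₀ * B * (1 / (ω : ℝ)))
          * (u ^ (M - 1 + 1 / (ω : ℝ)) * Real.exp (-δ * u)) with hbnd_def
  have hbnd_int : IntegrableOn bnd (Set.Ioi 0) := by
    apply Integrable.add
    apply Integrable.add
    · exact (gammaInt (by linarith) hδ).const_mul _
    · have h6 : (0:ℝ) < 1 / (ω : ℝ) := by positivity
      exact (gammaInt (by linarith) hδ).const_mul _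
    · have : (-1 : ℝ) < M - 1 + 1 / (ω : ℝ) := by
        have : (0:ℝ) < 1 / (ω : ℝ) := by positivity
        linarith
      exact (gammaInt this hδ).const_mul _
  have key := hasDerivAt_integral_of_dominated_loc_of_deriv_le
    (μ := volume.restrict (Set.Ioi (0:ℝ))) (x₀ := s₀)
    (F := fun z u => Gf M r θ ω z u) (F' := fun z u => Gf' M r θ ω z u)
    (bound := bnd) (Metric.ball_mem_nhds s₀ hε) ?_ ?_ ?_ ?_ ?_ ?_
  · exact key.2.differentiableAt.differentiableWithinAt
  · -- measurability of Gf z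
    filter_upwards [h3] with z hz
    exact (Gf_continuousOn hr hω hθ₁ hθ₂ hz).aestronglyMeasurable measurableSet_Ioi
  · exact Gf_integrableOn hM hr hω hθ₁ hθ₂ hs₀
  · exact (Gf'_continuousOn hM hr hω hθ₁ hθ₂ hs₀).aestronglyMeasurable measurableSet_Ioi
  · -- the bound
    rw [ae_restrict_iff' measurableSet_Ioi]
    filter_upwards with u hu
    intro z hz
    have hu' : (0 : ℝ) < u := hu
    obtain ⟨⟨hzc, hzre⟩, hzU⟩ := hball z hz
    have hzne : z ≠ 0 := Udom_ne_zero hzU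
    have hD_lb : cb ≤ Complex.abs (Df r θ ω z u) :=
      le_trans hzc.le (sin_le_abs_Df r θ ω hzne u)
    have hzabs_ge : δ ≤ Complex.abs z := le_trans hzre.le (Complex.re_le_abs z)
    have hzabs_le : Complex.abs z ≤ R := by
      have h5 : ‖z - s₀‖ < ε := mem_ball_iff_norm.mp hz
      calc Complex.abs z = ‖s₀ + (z - s₀)‖ := by rw [Complex.norm_eq_abs]; congr 1; ring
        _ ≤ ‖s₀‖ + ‖z - s₀‖ := norm_add_le _ _
        _ ≤ Complex.abs s₀ + ε := by rw [Complex.norm_eq_abs]; linarith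
        _ = R := rfl
    have hkpos : (0:ℝ) < (u / r) ^ (1 / (ω : ℝ)) := Real.rpow_pos_of_pos (by positivity) _
    have hωge : (1:ℝ) ≤ (ω:ℝ) := by exact_mod_cast hω
    have habsE : Complex.abs (Complex.exp (-(θ / (ω : ℝ)) * Complex.I)) = 1 := by
      rw [Complex.abs_exp]
      simp [Complex.mul_re]
    have hexp_eq : ((((1 / (ω : ℝ) : ℝ)) : ℂ) - 1) = (((1 / (ω : ℝ) - 1 : ℝ)) : ℂ) := by
      push_cast; ring
    have hzcpow1 : Complex.abs (z ^ ((((1 / (ω : ℝ) : ℝ)) : ℂ) - 1)) ≤ B := by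
      rw [hexp_eq, abs_cpow_real' hzne, hB_def]
      apply Real.rpow_le_rpow_of_nonpos hδ hzabs_ge
      have : 1 / (ω:ℝ) ≤ 1 := by
        rw [div_le_one (by positivity)]; exact hωge
      linarith
    have hzcpow2 : Complex.abs (z ^ ((((1 / (ω : ℝ) : ℝ)) : ℂ))) ≤ R ^ (1 / (ω : ℝ)) := by
      rw [abs_cpow_real' hzne]
      exact Real.rpow_le_rpow (Complex.abs.nonneg z) hzabs_le (by positivity)
    have hDub : Complex.abs (Df r θ ω z u)
        ≤ 1 + (u / r) ^ (1 / (ω : ℝ)) * R ^ (1 / (ω : ℝ)) := by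
      rw [Df]
      calc Complex.abs (1 + (((u / r) ^ (1 / (ω : ℝ)) : ℝ) : ℂ)
            * z ^ ((1 / (ω : ℝ) : ℝ) : ℂ) * Complex.exp (-(θ / (ω : ℝ)) * Complex.I))
          ≤ Complex.abs 1 + Complex.abs ((((u / r) ^ (1 / (ω : ℝ)) : ℝ) : ℂ)
            * z ^ ((1 / (ω : ℝ) : ℝ) : ℂ) * Complex.exp (-(θ / (ω : ℝ)) * Complex.I)) :=
            Complex.abs.add_le _ _
        _ = 1 + (u / r) ^ (1 / (ω : ℝ)) * Complex.abs (z ^ ((1 / (ω : ℝ) : ℝ) : ℂ)) := by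
            rw [map_mul, map_mul, habsE, Complex.abs_ofReal,
              _root_.abs_of_nonneg hkpos.le, map_one, mul_one]
        _ ≤ 1 + (u / r) ^ (1 / (ω : ℝ)) * R ^ (1 / (ω : ℝ)) := by
            have := mul_le_mul_of_nonneg_left hzcpow2 hkpos.le
            linarith
    have hXb : Complex.abs ((-u : ℂ) * Df r θ ω z u - (((u / r) ^ (1 / (ω : ℝ)) : ℝ) : ℂ) *
          ((((1 / (ω : ℝ) : ℝ)) : ℂ) * z ^ ((((1 / (ω : ℝ) : ℝ)) : ℂ) - 1)) *
          Complex.exp (-(θ / (ω : ℝ)) * Complex.I))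
        ≤ u * (1 + (u / r) ^ (1 / (ω : ℝ)) * R ^ (1 / (ω : ℝ)))
          + (u / r) ^ (1 / (ω : ℝ)) * (1 / (ω : ℝ)) * B := by
      have t1 : ∀ a b : ℂ, Complex.abs (a - b) ≤ Complex.abs a + Complex.abs b := by
        intro a b
        simpa [sub_eq_add_neg] using Complex.abs.add_le a (-b)
      refine le_trans (t1 _ _) (add_le_add ?_ ?_)
      · rw [map_mul]
        have : Complex.abs (-u : ℂ) = u := by
          rw [map_neg_eq_map, Complex.abs_ofReal, _root_.abs_of_nonneg hu'.le]
        rw [this]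
        exact mul_le_mul_of_nonneg_left hDub hu'.le
      · rw [map_mul, map_mul, map_mul, habsE, mul_one, Complex.abs_ofReal,
          Complex.abs_ofReal, _root_.abs_of_nonneg hkpos.le,
          _root_.abs_of_nonneg (by positivity : (0:ℝ) ≤ 1 / (ω:ℝ))]
        rw [mul_assoc]
        apply mul_le_mul_of_nonneg_left _ hkpos.le
        exact mul_le_mul_of_nonneg_left hzcpow1 (by positivity)
    have hNb : Real.exp (-(z.re) * u) * u ^ (M - 1)
        ≤ Real.exp (-δ * u) * u ^ (M - 1) := by
      apply mul_le_mul_of_nonneg_right _ (Real.rpow_nonneg hu'.le _)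
      apply Real.exp_le_exp.mpr
      nlinarith
    calc ‖Gf' M r θ ω z u‖
        = Real.exp (-(z.re) * u) * u ^ (M - 1) *
            Complex.abs ((-u : ℂ) * Df r θ ω z u - (((u / r) ^ (1 / (ω : ℝ)) : ℝ) : ℂ) *
              ((((1 / (ω : ℝ) : ℝ)) : ℂ) * z ^ ((((1 / (ω : ℝ) : ℝ)) : ℂ) - 1)) *
              Complex.exp (-(θ / (ω : ℝ)) * Complex.I))
            / (Complex.abs (Df r θ ω z u)) ^ 2 := by
          rw [Gf', Complex.norm_eq_abs, map_div₀, map_pow, map_mul, norm_Gf_num hu']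
      _ ≤ (Real.exp (-δ * u) * u ^ (M - 1)) *
            (u * (1 + (u / r) ^ (1 / (ω : ℝ)) * R ^ (1 / (ω : ℝ)))
              + (u / r) ^ (1 / (ω : ℝ)) * (1 / (ω : ℝ)) * B) / cb ^ 2 := by
          apply div_le_div₀ (by positivity) ?_ (by positivity) ?_
          · exact mul_le_mul hNb hXb (Complex.abs.nonneg _) (by positivity)
          · exact pow_le_pow_left₀ hcb.le hD_lb 2
      _ = bnd u := by
          have hkr : (u / r) ^ (1 / (ω : ℝ)) = u ^ (1 / (ω : ℝ)) * r₀ := by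
            rw [hr₀_def, Real.div_rpow hu'.le hr.le, div_eq_mul_inv]
          have hA : u ^ M = u ^ (M - 1) * u := by
            rw [← Real.rpow_add_one hu'.ne']; norm_num
          have hB2 : u ^ (M + 1 / (ω : ℝ)) = u ^ (M - 1) * u * u ^ (1 / (ω : ℝ)) := by
            rw [show M + 1 / (ω:ℝ) = (M - 1) + 1 / (ω:ℝ) + 1 by ring,
              Real.rpow_add_one hu'.ne', Real.rpow_add hu']
            ring
          have hC : u ^ (M - 1 + 1 / (ω : ℝ)) = u ^ (M - 1) * u ^ (1 / (ω : ℝ)) :=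
            Real.rpow_add hu' _ _
          simp only [hbnd_def]
          rw [hkr, hA, hB2, hC]
          field_simp
  · exact hbnd_int
  · -- differentiability
    rw [ae_restrict_iff' measurableSet_Ioi]
    filter_upwards with u hu
    intro z hz
    obtain ⟨⟨hzc, _⟩, hzU⟩ := hball z hz
    have hcbpos : (0:ℝ) < cb := hcb
    have hD : Df r θ ω z u ≠ 0 := Df_ne_zero hω hθ₁ hθ₂ hzU u
    exact hasDerivAt_Gf (Udom_slit hzU) u hD


lemma Gf_one (u : ℝ) :
    Gf M r θ ω 1 u = ((Real.exp (-u) * u ^ (M - 1) : ℝ) : ℂ) /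
      (1 + (((u / r) ^ (1 / (ω : ℝ)) : ℝ) : ℂ) *
        Complex.exp (-(θ / (ω : ℝ)) * Complex.I)) := by
  rw [Gf, Df, Complex.one_cpow]
  push_cast
  ring

lemma scaling (hM : 0 < M) (hr : 0 < r) (hω : 0 < ω) {x : ℝ} (hx : 0 < x) :
    (∫ t in Set.Ioi (0 : ℝ),
        ((Real.exp (-t) * t ^ (M - 1) : ℝ) : ℂ) /
          (1 + (((t / r) ^ (1 / (ω : ℝ)) : ℝ) : ℂ) *
            Complex.exp (-(θ / (ω : ℝ)) * Complex.I)))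
      = ((x : ℂ) ^ (M : ℂ)) * ∫ u in Set.Ioi (0 : ℝ), Gf M r θ ω x u := by
  set f : ℝ → ℂ := fun t =>
    ((Real.exp (-t) * t ^ (M - 1) : ℝ) : ℂ) /
      (1 + (((t / r) ^ (1 / (ω : ℝ)) : ℝ) : ℂ) *
        Complex.exp (-(θ / (ω : ℝ)) * Complex.I)) with hf_def
  have h0 := MeasureTheory.integral_comp_mul_left_Ioi f 0 hx
  rw [mul_zero] at h0
  have h1 : ∀ u ∈ Set.Ioi (0:ℝ), f (x * u) = ((x ^ (M - 1) : ℝ) : ℂ) * Gf M r θ ω x u := by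
    intro u hu
    have hu' : (0:ℝ) < u := hu
    have e1 : (x * u) ^ (M - 1) = x ^ (M - 1) * u ^ (M - 1) :=
      Real.mul_rpow hx.le hu'.le
    have e2 : (x * u / r) ^ (1 / (ω:ℝ)) = (u / r) ^ (1 / (ω:ℝ)) * x ^ (1 / (ω:ℝ)) := by
      rw [show x * u / r = u / r * x by ring]
      exact Real.mul_rpow (by positivity) hx.le
    have e3 : ((x ^ (1 / (ω:ℝ)) : ℝ) : ℂ) = (x : ℂ) ^ ((1 / (ω : ℝ) : ℝ) : ℂ) :=
      Complex.ofReal_cpow hx.le _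
    rw [hf_def, Gf, Df]
    simp only [e1, e2]
    rw [← e3]
    push_cast
    ring
  rw [MeasureTheory.setIntegral_congr_fun measurableSet_Ioi h1] at h0
  rw [MeasureTheory.integral_const_mul] at h0
  -- h0 : ↑(x^(M-1)) * ∫ Gf = x⁻¹ • ∫ f
  have h2 : (∫ t in Set.Ioi (0:ℝ), f t)
      = x • (((x ^ (M - 1) : ℝ) : ℂ) * ∫ u in Set.Ioi (0:ℝ), Gf M r θ ω x u) := by
    rw [h0, smul_smul, mul_inv_cancel₀ hx.ne', one_smul]
  rw [h2, ← Complex.ofReal_cpow hx.le,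
    show x ^ M = x ^ (M - 1) * x from by rw [← Real.rpow_add_one hx.ne']; norm_num,
    Complex.real_smul]
  push_cast
  ring


variable {φ : ℝ}

/-- The rotated point `e^{iφ}/cos φ`. -/
noncomputable def sphi (φ : ℝ) : ℂ :=
  ((Real.cos φ)⁻¹ : ℝ) * Complex.exp ((φ : ℂ) * Complex.I)

lemma sphi_ne (hcos : 0 < Real.cos φ) : sphi φ ≠ 0 :=
  mul_ne_zero (Complex.ofReal_ne_zero.mpr (inv_ne_zero hcos.ne')) (Complex.exp_ne_zero _)

lemma sphi_abs (hcos : 0 < Real.cos φ) : Complex.abs (sphi φ) = (Real.cos φ)⁻¹ := by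
  rw [sphi, map_mul, Complex.abs_ofReal, Complex.abs_exp]
  simp [Complex.mul_re, _root_.abs_of_nonneg (inv_pos.mpr hcos).le]

lemma sphi_arg (hφ₁ : 0 < φ) (hφ₂ : φ < π / 2) : (sphi φ).arg = φ := by
  have hcos : 0 < Real.cos φ := Real.cos_pos_of_mem_Ioo ⟨by linarith [Real.pi_pos], hφ₂⟩
  rw [sphi, Complex.arg_real_mul _ (inv_pos.mpr hcos), Complex.exp_mul_I]
  exact Complex.arg_cos_add_sin_mul_I ⟨by linarith [Real.pi_pos], by linarith [Real.pi_pos]⟩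

lemma sphi_mem (hφ₁ : 0 < φ) (hφ₂ : φ < π / 2) {ψ : ℝ} (hψ₁ : 0 < ψ) (hψ₂ : ψ < π / 2) :
    sphi φ ∈ Udom ψ := by
  have hcos : 0 < Real.cos φ := Real.cos_pos_of_mem_Ioo ⟨by linarith [Real.pi_pos], hφ₂⟩
  have hsin : 0 < Real.sin φ := Real.sin_pos_of_pos_of_lt_pi hφ₁ (by linarith [Real.pi_pos])
  have hre : (sphi φ).re = (Real.cos φ)⁻¹ * Real.cos φ := by
    rw [sphi, Complex.re_ofReal_mul, Complex.exp_ofReal_mul_I_re]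
  have him : (sphi φ).im = (Real.cos φ)⁻¹ * Real.sin φ := by
    rw [sphi, Complex.im_ofReal_mul, Complex.exp_ofReal_mul_I_im]
  have htan : Real.tan (-ψ) < 0 := by
    rw [Real.tan_neg]
    exact neg_neg_of_pos (Real.tan_pos_of_pos_of_lt_pi_div_two hψ₁ hψ₂)
  constructor
  · rw [hre, inv_mul_cancel₀ hcos.ne']; norm_num
  · rw [hre, him, inv_mul_cancel₀ hcos.ne', mul_one]
    have : 0 < (Real.cos φ)⁻¹ * Real.sin φ := by positivity
    linarith

lemma sphi_cpow (hM : 0 < M) (hφ₁ : 0 < φ) (hφ₂ : φ < π / 2) :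
    (sphi φ) ^ (M : ℂ)
      = Complex.exp ((M : ℂ) * φ * Complex.I) / ((Real.cos φ ^ M : ℝ) : ℂ) := by
  have hcos : 0 < Real.cos φ := Real.cos_pos_of_mem_Ioo ⟨by linarith [Real.pi_pos], hφ₂⟩
  rw [cpow_real_eq _ (sphi_ne hcos) M, sphi_abs hcos, sphi_arg hφ₁ hφ₂,
    Real.inv_rpow hcos.le]
  push_cast
  field_simp

lemma Gf_sphi (hr : 0 < r) (hω : 0 < ω) (hφ₁ : 0 < φ) (hφ₂ : φ < π / 2)
    {u : ℝ} (hu : 0 < u) :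
    Gf M r θ ω (sphi φ) u
      = Complex.exp (-(u : ℂ) * Complex.exp ((φ : ℂ) * Complex.I) / (Real.cos φ : ℂ)) *
          ((u ^ (M - 1) : ℝ) : ℂ) /
          (1 + (((u / (r * Real.cos φ)) ^ (1 / (ω : ℝ)) : ℝ) : ℂ) *
            Complex.exp (((φ - θ) / (ω : ℝ)) * Complex.I)) := by
  have hcos : 0 < Real.cos φ := Real.cos_pos_of_mem_Ioo ⟨by linarith [Real.pi_pos], hφ₂⟩
  rw [Gf, Df, cpow_real_eq _ (sphi_ne hcos) (1 / (ω : ℝ)), sphi_abs hcos,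
    sphi_arg hφ₁ hφ₂]
  congr 1
  · -- numerators
    congr 1
    rw [sphi]
    push_cast
    ring
  · -- denominators
    have e1 : (u / r) ^ (1 / (ω:ℝ)) * ((Real.cos φ)⁻¹) ^ (1 / (ω:ℝ))
        = (u / (r * Real.cos φ)) ^ (1 / (ω:ℝ)) := by
      rw [← Real.mul_rpow (by positivity) (by positivity)]
      congr 1
      field_simp
    have e2 : Complex.exp (((1 / (ω : ℝ) * φ : ℝ) : ℂ) * Complex.I) *
          Complex.exp (-(θ / (ω : ℝ)) * Complex.I)
        = Complex.exp (((φ - θ) / (ω : ℝ)) * Complex.I) := by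
      rw [← Complex.exp_add]
      congr 1
      push_cast
      ring
    calc 1 + (((u / r) ^ (1 / (ω : ℝ)) : ℝ) : ℂ) *
          ((((Real.cos φ)⁻¹ ^ (1 / (ω : ℝ)) : ℝ) : ℂ) *
            Complex.exp (((1 / (ω : ℝ) * φ : ℝ) : ℂ) * Complex.I)) *
          Complex.exp (-(θ / (ω : ℝ)) * Complex.I)
        = 1 + (((u / r) ^ (1 / (ω : ℝ)) * ((Real.cos φ)⁻¹) ^ (1 / (ω : ℝ)) : ℝ) : ℂ) *
          (Complex.exp (((1 / (ω : ℝ) * φ : ℝ) : ℂ) * Complex.I) *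
            Complex.exp (-(θ / (ω : ℝ)) * Complex.I)) := by
          push_cast
          ring
      _ = 1 + (((u / (r * Real.cos φ)) ^ (1 / (ω : ℝ)) : ℝ) : ℂ) *
          Complex.exp (((φ - θ) / (ω : ℝ)) * Complex.I) := by
          rw [e1, e2]

end Main
end HypContour

open HypContour in
set_option maxHeartbeats 1000000 in
/-- Contour-rotation identity for the generalised first-level hyperterminant:
for `M > 0`, `ω` a positive integer, `r > 0`, `0 < φ < π/2` and `πω/2 < θ < πω`,
`∫_0^∞ e^{-t} t^{M-1} / (1 + (t/r)^{1/ω} e^{-iθ/ω}) dt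
  = (e^{iMφ}/(cos φ)^M) ∫_0^∞ e^{-u e^{iφ}/cos φ} u^{M-1}
      / (1 + (u/(r cos φ))^{1/ω} e^{i(φ-θ)/ω}) du`,
both integrals being absolutely convergent. -/
theorem hyperterminant_contour_rotation
    (M : ℝ) (hM : 0 < M) (ω : ℕ) (hω : 0 < ω) (r : ℝ) (hr : 0 < r)
    (φ : ℝ) (hφ₁ : 0 < φ) (hφ₂ : φ < π / 2)
    (θ : ℝ) (hθ₁ : π * ω / 2 < θ) (hθ₂ : θ < π * ω) :
    IntegrableOn
      (fun t : ℝ =>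
        ((Real.exp (-t) * t ^ (M - 1) : ℝ) : ℂ) /
          (1 + (((t / r) ^ (1 / (ω : ℝ)) : ℝ) : ℂ) *
            Complex.exp (-(θ / (ω : ℝ)) * Complex.I)))
      (Set.Ioi (0 : ℝ)) ∧
    IntegrableOn
      (fun u : ℝ =>
        Complex.exp (-(u : ℂ) * Complex.exp ((φ : ℂ) * Complex.I) / (Real.cos φ : ℂ)) *
          ((u ^ (M - 1) : ℝ) : ℂ) /
          (1 + (((u / (r * Real.cos φ)) ^ (1 / (ω : ℝ)) : ℝ) : ℂ) *
            Complex.exp (((φ - θ) / (ω : ℝ)) * Complex.I)))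
      (Set.Ioi (0 : ℝ)) ∧
    (∫ t in Set.Ioi (0 : ℝ),
        ((Real.exp (-t) * t ^ (M - 1) : ℝ) : ℂ) /
          (1 + (((t / r) ^ (1 / (ω : ℝ)) : ℝ) : ℂ) *
            Complex.exp (-(θ / (ω : ℝ)) * Complex.I)))
      = Complex.exp ((M : ℂ) * φ * Complex.I) / ((Real.cos φ ^ M : ℝ) : ℂ) *
        ∫ u in Set.Ioi (0 : ℝ),
          Complex.exp (-(u : ℂ) * Complex.exp ((φ : ℂ) * Complex.I) / (Real.cos φ : ℂ)) *
            ((u ^ (M - 1) : ℝ) : ℂ) /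
            (1 + (((u / (r * Real.cos φ)) ^ (1 / (ω : ℝ)) : ℝ) : ℂ) *
              Complex.exp (((φ - θ) / (ω : ℝ)) * Complex.I)) := by
  have hψ₁ : 0 < min (π * ω - θ) (π / 4) := psi_pos hθ₂
  have hψ₂ : min (π * ω - θ) (π / 4) < π / 2 := psi_lt hθ₂
  have hU1 : (1 : ℂ) ∈ Udom (min (π * ω - θ) (π / 4)) := by
    constructor
    · simp
    · simp only [Complex.one_re, Complex.one_im, mul_one]
      rw [Real.tan_neg]
      exact neg_neg_of_pos (Real.tan_pos_of_pos_of_lt_pi_div_two hψ₁ hψ₂)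
  have hUs : sphi φ ∈ Udom (min (π * ω - θ) (π / 4)) := sphi_mem hφ₁ hφ₂ hψ₁ hψ₂
  -- first integrability
  have hint1 : IntegrableOn
      (fun t : ℝ =>
        ((Real.exp (-t) * t ^ (M - 1) : ℝ) : ℂ) /
          (1 + (((t / r) ^ (1 / (ω : ℝ)) : ℝ) : ℂ) *
            Complex.exp (-(θ / (ω : ℝ)) * Complex.I)))
      (Set.Ioi (0 : ℝ)) := by
    apply (Gf_integrableOn hM hr hω hθ₁ hθ₂ hU1).congr_fun _ measurableSet_Ioi
    intro u _
    exact Gf_one u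
  have hint2 : IntegrableOn
      (fun u : ℝ =>
        Complex.exp (-(u : ℂ) * Complex.exp ((φ : ℂ) * Complex.I) / (Real.cos φ : ℂ)) *
          ((u ^ (M - 1) : ℝ) : ℂ) /
          (1 + (((u / (r * Real.cos φ)) ^ (1 / (ω : ℝ)) : ℝ) : ℂ) *
            Complex.exp (((φ - θ) / (ω : ℝ)) * Complex.I)))
      (Set.Ioi (0 : ℝ)) := by
    apply (Gf_integrableOn hM hr hω hθ₁ hθ₂ hUs).congr_fun _ measurableSet_Ioi
    intro u hu
    exact Gf_sphi hr hω hφ₁ hφ₂ hu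
  refine ⟨hint1, hint2, ?_⟩
  -- identity theorem
  have hdiffH : DifferentiableOn ℂ
      (fun z : ℂ => z ^ (M : ℂ) * ∫ u in Set.Ioi (0:ℝ), Gf M r θ ω z u)
      (Udom (min (π * ω - θ) (π / 4))) := by
    apply DifferentiableOn.mul _ (F_differentiableOn hM hr hω hθ₁ hθ₂)
    intro z hz
    exact (Complex.hasStrictDerivAt_cpow_const
      (Udom_slit hz)).hasDerivAt.differentiableAt.differentiableWithinAt
  have hfreq : ∃ᶠ z in nhdsWithin (1 : ℂ) {(1 : ℂ)}ᶜ,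
      (fun z : ℂ => z ^ (M : ℂ) * ∫ u in Set.Ioi (0:ℝ), Gf M r θ ω z u) z
        = (fun _ : ℂ => ∫ t in Set.Ioi (0 : ℝ),
            ((Real.exp (-t) * t ^ (M - 1) : ℝ) : ℂ) /
              (1 + (((t / r) ^ (1 / (ω : ℝ)) : ℝ) : ℂ) *
                Complex.exp (-(θ / (ω : ℝ)) * Complex.I))) z := by
    have htend : Tendsto (fun n : ℕ => ((1 + (1:ℝ)/(n+1) : ℝ) : ℂ)) atTop
        (nhdsWithin (1 : ℂ) {(1 : ℂ)}ᶜ) := by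
      apply tendsto_nhdsWithin_of_tendsto_nhds_of_eventually_within
      · have h : Tendsto (fun n : ℕ => 1 + (1:ℝ)/(n+1)) atTop (nhds 1) := by
          have h0 := tendsto_one_div_add_atTop_nhds_zero_nat (𝕜 := ℝ)
          have := tendsto_const_nhds (x := (1:ℝ)) (f := atTop (α := ℕ)) |>.add h0
          simpa using this
        have := (Complex.continuous_ofReal.tendsto (1:ℝ)).comp h
        simpa [Function.comp_def, Complex.ofReal_add, Complex.ofReal_inv,
          Complex.ofReal_natCast] using this
      · filter_upwards with n
        simp only [Set.mem_compl_iff, Set.mem_singleton_iff]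
        intro hcontra
        have h1 : (1 + (1:ℝ)/(n+1)) = 1 := by exact_mod_cast hcontra
        have hp : (0:ℝ) < 1/(n+1:ℝ) := by positivity
        linarith
    apply htend.frequently
    apply Filter.Frequently.of_forall
    intro n
    exact (scaling hM hr hω (x := 1 + 1/(n+1)) (by positivity)).symm
  have hEq := AnalyticOnNhd.eqOn_of_preconnected_of_frequently_eq
    (hdiffH.analyticOnNhd (Udom_open _)) analyticOnNhd_const
    ((Udom_convex _).isPreconnected) hU1 hfreq
  have hval := hEq hUs
  simp only at hval
  rw [← hval, sphi_cpow hM hφ₁ hφ₂]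
  congr 1
  apply MeasureTheory.setIntegral_congr_fun measurableSet_Ioi
  intro u hu
  exact Gf_sphi hr hω hφ₁ hφ₂ hu
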